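/- Let u be a recurrent infinite word and F a cellular automaton of radius r whose local rule f satisfies: f(x₁y₁) = f(x₂y₂) if and only if x₁ = x₂ (for letters x₁,x₂ and words y₁,y₂ of length r−1). Then F(u) is balanced if and only if u is balanced. -/

import Mathlib

/-- The window of length `n` of an infinite word `u` starting at position `i`. -/
def window {A : Type*} (u : ℕ → A) (i n : ℕ) : List A :=
  (List.range n).map (fun j => u (i + j))

/-- `w` is a (finite) factor of the infinite word `u`. -/
def IsFactor {A : Type*} (u : ℕ → A) (w : List A) : Prop :=
  ∃ i, w = window u i w.length

/-- The cellular automaton with local rule `f` of radius `r`, on finite words. -/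
def caF {A B : Type*} (f : List A → B) (r : ℕ) (w : List A) : List B :=
  (List.range (w.length + 1 - r)).map (fun i => f ((w.drop i).take r))

/-- The cellular automaton with local rule `f` of radius `r`, on infinite words. -/
def caFInf {A B : Type*} (f : List A → B) (r : ℕ) (u : ℕ → A) : ℕ → B :=
  fun i => f (window u i r)

/-- The set of factors of length `n` of `u`. -/
def factorsOfLen {A : Type*} (u : ℕ → A) (n : ℕ) : Set (List A) :=
  {w | w.length = n ∧ IsFactor u w}

/-- The factor complexity function. -/
noncomputable def complexity {A : Type*} (u : ℕ → A) (n : ℕ) : ℕ :=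
  Nat.card (factorsOfLen u n)

/-- `u` is recurrent: every factor occurs at arbitrarily large positions. -/
def Recurrent {A : Type*} (u : ℕ → A) : Prop :=
  ∀ w : List A, IsFactor u w → ∀ N : ℕ, ∃ p, N ≤ p ∧ w = window u p w.length

/-- `u` is balanced: any two equal-length factors differ by at most 1 in the
number of occurrences of each letter. -/
def BalancedWord {A : Type*} [DecidableEq A] (u : ℕ → A) : Prop :=
  ∀ x : A, ∀ v w : List A, IsFactor u v → IsFactor u w → v.length = w.length →
    |(v.count x : ℤ) - (w.count x : ℤ)| ≤ 1
lemma window_length {A : Type*} (u : ℕ → A) (i n : ℕ) : (window u i n).length = n := by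
  simp [window]

theorem ca_balanced {A B : Type*} [DecidableEq A] [DecidableEq B]
    (f : List A → B) (r : ℕ) (hr : 1 ≤ r)
    (hf : ∀ (x₁ x₂ : A) (y₁ y₂ : List A), y₁.length = r - 1 → y₂.length = r - 1 →
      (f (x₁ :: y₁) = f (x₂ :: y₂) ↔ x₁ = x₂))
    (u : ℕ → A) (hrec : Recurrent u) :
    BalancedWord (caFInf f r u) ↔ BalancedWord u := by
  classical
  set φ : A → B := fun a => f (a :: List.replicate (r-1) a) with hφ
  have hinj : Function.Injective φ := fun a b h =>
    (hf a b _ _ List.length_replicate List.length_replicate).mp h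
  have heq : ∀ i, caFInf f r u i = φ (u i) := by
    intro i
    have hw : window u i r = u i :: window u (i+1) (r-1) := by
      obtain ⟨m, rfl⟩ : ∃ m, r = m + 1 := ⟨r - 1, (Nat.succ_pred_eq_of_pos hr).symm⟩
      simp only [window, List.range_succ_eq_map, List.map_cons, List.map_map, Nat.add_zero,
        Nat.add_sub_cancel]
      congr 1
      apply List.map_congr_left
      intro j hj
      simp only [Function.comp]
      congr 1
      omega
    show f (window u i r) = φ (u i)
    rw [hw]
    exact (hf _ _ _ _ (by simp [window_length]) List.length_replicate).mpr rfl
  have hwmap : ∀ i n, window (caFInf f r u) i n = (window u i n).map φ := by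
    intro i n
    simp only [window, List.map_map]
    exact List.map_congr_left fun j _ => heq _
  have hfac : ∀ v : List A, IsFactor u v → IsFactor (caFInf f r u) (v.map φ) := by
    rintro v ⟨i, hi⟩
    exact ⟨i, by rw [List.length_map, hwmap, ← hi]⟩
  constructor
  · intro hbal x v w hv hw hlen
    have := hbal (φ x) (v.map φ) (w.map φ) (hfac v hv) (hfac w hw) (by simp [hlen])
    rwa [List.count_map_of_injective _ φ hinj, List.count_map_of_injective _ φ hinj] at this
  · intro hbal y v w hv hw hlen
    obtain ⟨i, hi⟩ := hv
    obtain ⟨j, hj⟩ := hw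
    set v' := window u i v.length with hv'
    set w' := window u j w.length with hw'
    have hvm : v = v'.map φ := by rw [hi, hwmap]
    have hwm : w = w'.map φ := by rw [hj, hwmap]
    have hv'len : v'.length = v.length := window_length u i v.length
    have hw'len : w'.length = w.length := window_length u j w.length
    have hv'fac : IsFactor u v' := ⟨i, by rw [hv'len]⟩
    have hw'fac : IsFactor u w' := ⟨j, by rw [hw'len]⟩
    by_cases hy : ∃ a : A, φ a = y
    · obtain ⟨a, rfl⟩ := hy
      have := hbal a v' w' hv'fac hw'fac (by rw [hv'len, hw'len, hlen])
      rwa [hvm, hwm, List.count_map_of_injective _ φ hinj,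
        List.count_map_of_injective _ φ hinj]
    · push_neg at hy
      have h1 : v.count y = 0 := by
        rw [hvm, List.count_eq_zero]
        intro hmem
        obtain ⟨a, _, ha⟩ := List.mem_map.mp hmem
        exact hy a ha
      have h2 : w.count y = 0 := by
        rw [hwm, List.count_eq_zero]
        intro hmem
        obtain ⟨a, _, ha⟩ := List.mem_map.mp hmem
        exact hy a ha
      simp [h1, h2]
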